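/- Let X = [[1,1],[0,1]] and Y = [[1,0],[-1,1]] in SL(2,ℤ). If A = (-I)·X^{a_1} Y^{-b_1} ⋯ X^{a_n} Y^{-b_n} with all a_i, b_j ≥ 0 and some a_i ≠ 0 and some b_j ≠ 0, then trace(A) < -2. -/

import Mathlib

open Matrix

def Xm : Matrix.SpecialLinearGroup (Fin 2) ℤ :=
  ⟨!![1, 1; 0, 1], by norm_num [Matrix.det_fin_two_of]⟩

def Ym : Matrix.SpecialLinearGroup (Fin 2) ℤ :=
  ⟨!![1, 0; -1, 1], by norm_num [Matrix.det_fin_two_of]⟩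

def negI : Matrix.SpecialLinearGroup (Fin 2) ℤ :=
  ⟨!![-1, 0; 0, -1], by norm_num [Matrix.det_fin_two_of]⟩

abbrev SL2 := Matrix.SpecialLinearGroup (Fin 2) ℤ

def Zm : SL2 := ⟨!![1, 0; 1, 1], by norm_num [Matrix.det_fin_two_of]⟩

lemma Xm_pow (k : ℕ) : ((Xm ^ k : SL2) : Matrix (Fin 2) (Fin 2) ℤ) = !![1, (k:ℤ); 0, 1] := by
  induction k with
  | zero => simp [Matrix.one_fin_two]
  | succ k ih =>
    rw [pow_succ, Matrix.SpecialLinearGroup.coe_mul, ih]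
    show _ = !![1, ((k:ℤ)+1); 0, 1]
    simp [Xm]
    ring

lemma Zm_pow (k : ℕ) : ((Zm ^ k : SL2) : Matrix (Fin 2) (Fin 2) ℤ) = !![1, 0; (k:ℤ), 1] := by
  induction k with
  | zero => simp [Matrix.one_fin_two]
  | succ k ih =>
    rw [pow_succ, Matrix.SpecialLinearGroup.coe_mul, ih]
    ext i j
    fin_cases i <;> fin_cases j <;> simp [Zm, Matrix.mul_apply, Fin.sum_univ_two] <;> ring

lemma Ym_inv : Ym⁻¹ = Zm := by
  rw [eq_comm, eq_inv_iff_mul_eq_one]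
  ext i j
  rw [Matrix.SpecialLinearGroup.coe_mul]
  fin_cases i <;> fin_cases j <;>
    simp [Zm, Ym, Matrix.SpecialLinearGroup.coe_mul, Matrix.mul_apply, Fin.sum_univ_two,
      Matrix.one_fin_two]

lemma Ym_zpow_neg (k : ℕ) : Ym ^ (-(k:ℤ)) = Zm ^ k := by
  rw [_root_.zpow_neg, zpow_natCast, ← inv_pow, Ym_inv]

lemma Xm_zpow (k : ℕ) : Xm ^ (k:ℤ) = Xm ^ k := zpow_natCast _ _

def Good (M : SL2) : Prop :=
  1 ≤ (M : Matrix (Fin 2) (Fin 2) ℤ) 0 0 ∧ 0 ≤ (M : Matrix (Fin 2) (Fin 2) ℤ) 0 1 ∧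
  0 ≤ (M : Matrix (Fin 2) (Fin 2) ℤ) 1 0 ∧ 1 ≤ (M : Matrix (Fin 2) (Fin 2) ℤ) 1 1

lemma good_mul {M N : SL2} (hM : Good M) (hN : Good N) : Good (M * N) := by
  obtain ⟨h1, h2, h3, h4⟩ := hM
  obtain ⟨g1, g2, g3, g4⟩ := hN
  refine ⟨?_, ?_, ?_, ?_⟩ <;>
    simp only [Matrix.SpecialLinearGroup.coe_mul, Matrix.mul_apply, Fin.sum_univ_two] <;>
    nlinarith

lemma good_prod (L : List SL2) (h : ∀ M ∈ L, Good M) : Good L.prod := by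
  induction L with
  | nil => simp [Good, Matrix.one_fin_two]
  | cons M L ih =>
    rw [List.prod_cons]
    exact good_mul (h M (by simp)) (ih fun N hN => h N (by simp [hN]))

lemma pos01_mul_left {M N : SL2} (hM : Good M) (hN : Good N)
    (h : 0 < (M : Matrix (Fin 2) (Fin 2) ℤ) 0 1) :
    0 < ((M * N : SL2) : Matrix (Fin 2) (Fin 2) ℤ) 0 1 := by
  obtain ⟨h1, h2, h3, h4⟩ := hM
  obtain ⟨g1, g2, g3, g4⟩ := hN
  simp only [Matrix.SpecialLinearGroup.coe_mul, Matrix.mul_apply, Fin.sum_univ_two]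
  nlinarith

lemma pos01_mul_right {M N : SL2} (hM : Good M) (hN : Good N)
    (h : 0 < (N : Matrix (Fin 2) (Fin 2) ℤ) 0 1) :
    0 < ((M * N : SL2) : Matrix (Fin 2) (Fin 2) ℤ) 0 1 := by
  obtain ⟨h1, h2, h3, h4⟩ := hM
  obtain ⟨g1, g2, g3, g4⟩ := hN
  simp only [Matrix.SpecialLinearGroup.coe_mul, Matrix.mul_apply, Fin.sum_univ_two]
  nlinarith

lemma pos10_mul_left {M N : SL2} (hM : Good M) (hN : Good N)
    (h : 0 < (M : Matrix (Fin 2) (Fin 2) ℤ) 1 0) :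
    0 < ((M * N : SL2) : Matrix (Fin 2) (Fin 2) ℤ) 1 0 := by
  obtain ⟨h1, h2, h3, h4⟩ := hM
  obtain ⟨g1, g2, g3, g4⟩ := hN
  simp only [Matrix.SpecialLinearGroup.coe_mul, Matrix.mul_apply, Fin.sum_univ_two]
  nlinarith

lemma pos10_mul_right {M N : SL2} (hM : Good M) (hN : Good N)
    (h : 0 < (N : Matrix (Fin 2) (Fin 2) ℤ) 1 0) :
    0 < ((M * N : SL2) : Matrix (Fin 2) (Fin 2) ℤ) 1 0 := by
  obtain ⟨h1, h2, h3, h4⟩ := hM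
  obtain ⟨g1, g2, g3, g4⟩ := hN
  simp only [Matrix.SpecialLinearGroup.coe_mul, Matrix.mul_apply, Fin.sum_univ_two]
  nlinarith

lemma pos01_prod (L : List SL2) (h : ∀ M ∈ L, Good M)
    (hex : ∃ M ∈ L, 0 < (M : Matrix (Fin 2) (Fin 2) ℤ) 0 1) :
    0 < (L.prod : Matrix (Fin 2) (Fin 2) ℤ) 0 1 := by
  induction L with
  | nil => simp at hex
  | cons M L ih =>
    rw [List.prod_cons]
    have hM := h M (by simp)
    have hL : ∀ N ∈ L, Good N := fun N hN => h N (by simp [hN])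
    obtain ⟨N, hNmem, hNpos⟩ := hex
    rcases List.mem_cons.mp hNmem with rfl | hNL
    · exact pos01_mul_left hM (good_prod L hL) hNpos
    · exact pos01_mul_right hM (good_prod L hL) (ih hL ⟨N, hNL, hNpos⟩)

lemma pos10_prod (L : List SL2) (h : ∀ M ∈ L, Good M)
    (hex : ∃ M ∈ L, 0 < (M : Matrix (Fin 2) (Fin 2) ℤ) 1 0) :
    0 < (L.prod : Matrix (Fin 2) (Fin 2) ℤ) 1 0 := by
  induction L with
  | nil => simp at hex
  | cons M L ih =>
    rw [List.prod_cons]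
    have hM := h M (by simp)
    have hL : ∀ N ∈ L, Good N := fun N hN => h N (by simp [hN])
    obtain ⟨N, hNmem, hNpos⟩ := hex
    rcases List.mem_cons.mp hNmem with rfl | hNL
    · exact pos10_mul_left hM (good_prod L hL) hNpos
    · exact pos10_mul_right hM (good_prod L hL) (ih hL ⟨N, hNL, hNpos⟩)

lemma factor_coe (x y : ℕ) :
    ((Xm ^ (x:ℤ) * Ym ^ (-(y:ℤ)) : SL2) : Matrix (Fin 2) (Fin 2) ℤ) =
      !![1 + (x:ℤ)*(y:ℤ), (x:ℤ); (y:ℤ), 1] := by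
  rw [Xm_zpow, Ym_zpow_neg, Matrix.SpecialLinearGroup.coe_mul, Xm_pow, Zm_pow]
  ext i j
  fin_cases i <;> fin_cases j <;> simp [Matrix.mul_apply, Fin.sum_univ_two] <;> ring

/-- If `A = (-I)·X^{a_1} Y^{-b_1} ⋯ X^{a_n} Y^{-b_n}` with all `a_i, b_j ≥ 0`,
some `a_i ≠ 0` and some `b_j ≠ 0`, then `trace A < -2`. -/
theorem trace_lt_neg_two_of_typeII (n : ℕ) (a b : Fin n → ℕ)
    (ha : ∃ i, a i ≠ 0) (hb : ∃ j, b j ≠ 0)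
    (A : Matrix.SpecialLinearGroup (Fin 2) ℤ)
    (hA : A = negI * (List.ofFn fun i => Xm ^ (a i : ℤ) * Ym ^ (-(b i : ℤ))).prod) :
    Matrix.trace (A : Matrix (Fin 2) (Fin 2) ℤ) < -2 := by
  set L := (List.ofFn fun i => Xm ^ (a i : ℤ) * Ym ^ (-(b i : ℤ))) with hL
  have hmem : ∀ M ∈ L, Good M := by
    intro M hM
    rw [hL, List.mem_ofFn] at hM
    obtain ⟨i, rfl⟩ := hM
    unfold Good
    rw [factor_coe]
    refine ⟨?_, ?_, ?_, ?_⟩ <;> simp <;> positivity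
  have hgood := good_prod L hmem
  obtain ⟨i, hi⟩ := ha
  obtain ⟨j, hj⟩ := hb
  have h01 : 0 < (L.prod : Matrix (Fin 2) (Fin 2) ℤ) 0 1 := by
    apply pos01_prod L hmem
    refine ⟨Xm ^ (a i : ℤ) * Ym ^ (-(b i : ℤ)), ?_, ?_⟩
    · rw [hL, List.mem_ofFn]; exact ⟨i, rfl⟩
    · rw [factor_coe]; simpa using Nat.pos_of_ne_zero hi
  have h10 : 0 < (L.prod : Matrix (Fin 2) (Fin 2) ℤ) 1 0 := by
    apply pos10_prod L hmem
    refine ⟨Xm ^ (a j : ℤ) * Ym ^ (-(b j : ℤ)), ?_, ?_⟩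
    · rw [hL, List.mem_ofFn]; exact ⟨j, rfl⟩
    · rw [factor_coe]; simpa using Nat.pos_of_ne_zero hj
  obtain ⟨h1, h2, h3, h4⟩ := hgood
  have hdet : (L.prod : Matrix (Fin 2) (Fin 2) ℤ) 0 0 * (L.prod : Matrix (Fin 2) (Fin 2) ℤ) 1 1
      - (L.prod : Matrix (Fin 2) (Fin 2) ℤ) 0 1 * (L.prod : Matrix (Fin 2) (Fin 2) ℤ) 1 0 = 1 := by
    have := L.prod.property
    rwa [Matrix.det_fin_two] at this
  have htr : Matrix.trace (A : Matrix (Fin 2) (Fin 2) ℤ) =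
      -((L.prod : Matrix (Fin 2) (Fin 2) ℤ) 0 0 + (L.prod : Matrix (Fin 2) (Fin 2) ℤ) 1 1) := by
    rw [hA, Matrix.SpecialLinearGroup.coe_mul, Matrix.trace_fin_two]
    simp [negI, Matrix.mul_apply, Fin.sum_univ_two]
    ring
  rw [htr]
  have hsq := sq_nonneg ((L.prod : Matrix (Fin 2) (Fin 2) ℤ) 0 0 -
    (L.prod : Matrix (Fin 2) (Fin 2) ℤ) 1 1)
  nlinarith
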